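/- Let G be a finite directed acyclic graph on n vertices (a binary relation on the vertex set whose transitive closure is irreflexive) in which every vertex has at most d_m parents, i.e. in-degree at most d_m. Then the vertex set V admits a causal cut: there exist pairwise disjoint subsets C, V1, V2 with C ∪ V1 ∪ V2 = V such that no edge of G joins a vertex of V1 and a vertex of V2 in either direction, and moreover |V1| ≥ ⌊n/(2·d_m+2)⌋ and |V2| ≥ ⌊n/(2·d_m+2)⌋. -/

import Mathlib

/-- Every finite DAG (a relation whose transitive closure is irreflexive) in which
every vertex has at most `d_m` parents admits a balanced causal cut. -/
theorem stmt_0 {V : Type*} [Fintype V] [DecidableEq V]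
    (E : V → V → Prop) (d_m : ℕ)
    (hacyc : ∀ v : V, ¬ Relation.TransGen E v v)
    (hdeg : ∀ v : V, {u : V | E u v}.ncard ≤ d_m) :
    ∃ C V1 V2 : Finset V,
      Disjoint C V1 ∧ Disjoint C V2 ∧ Disjoint V1 V2 ∧
      C ∪ V1 ∪ V2 = Finset.univ ∧
      (∀ u ∈ V1, ∀ v ∈ V2, ¬ E u v ∧ ¬ E v u) ∧
      Fintype.card V / (2 * d_m + 2) ≤ V1.card ∧
      Fintype.card V / (2 * d_m + 2) ≤ V2.card := by
  classical
  set n := Fintype.card V with hn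
  set k := n / (2 * d_m + 2) with hk
  have hkn : k ≤ n := Nat.div_le_self _ _
  have hkm : k * (2 * d_m + 2) ≤ n := Nat.div_mul_le_self n _
  -- the partial order given by reachability
  set s : V → V → Prop := fun a b => a = b ∨ Relation.TransGen E a b with hs
  haveI : IsRefl V s := ⟨fun a => Or.inl rfl⟩
  haveI : IsTrans V s := ⟨fun a b c hab hbc => by
    rcases hab with rfl | hab
    · exact hbc
    rcases hbc with rfl | hbc
    · exact Or.inr hab
    · exact Or.inr (hab.trans hbc)⟩
  haveI : IsAntisymm V s := ⟨fun a b hab hba => by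
    rcases hab with rfl | hab
    · rfl
    rcases hba with rfl | hba
    · rfl
    exact absurd (hab.trans hba) (hacyc a)⟩
  haveI : IsPreorder V s := {}
  haveI : IsPartialOrder V s := {}
  obtain ⟨t, ht, hst⟩ := extend_partialOrder s
  haveI := ht
  -- topological sort
  set L := Finset.univ.sort t with hL
  have hLlen : L.length = n := by
    rw [hL, Finset.length_sort, Finset.card_univ]
  have hLnd : L.Nodup := Finset.sort_nodup Finset.univ t
  have hLmem : ∀ v : V, v ∈ L := fun v => (Finset.mem_sort t).2 (Finset.mem_univ v)
  set m := n - k with hm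
  have hpair : ∀ a ∈ L.take m, ∀ b ∈ L.drop m, t a b := by
    have h : L.Pairwise t := Finset.pairwise_sort Finset.univ t
    rw [← List.take_append_drop m L, List.pairwise_append] at h
    exact h.2.2
  set V2 : Finset V := (L.drop m).toFinset with hV2
  have hV2card : V2.card = k := by
    rw [hV2, List.toFinset_card_of_nodup (hLnd.sublist (List.drop_sublist m L)),
      List.length_drop, hLlen, hm]
    exact Nat.sub_sub_self hkn
  have htop : ∀ v ∈ V2, ∀ u : V, u ∉ V2 → t u v := by
    intro v hv u hu
    have hvL : v ∈ L.drop m := by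
      rw [hV2] at hv; exact List.mem_toFinset.1 hv
    have huL : u ∈ L.take m := by
      have := hLmem u
      rw [← List.take_append_drop m L, List.mem_append] at this
      rcases this with h | h
      · exact h
      · exact absurd (List.mem_toFinset.2 h) hu
    exact hpair u huL v hvL
  -- parents
  set P : V → Finset V := fun v => Finset.univ.filter (fun u => E u v) with hPdef
  have hP : ∀ v, (P v).card ≤ d_m := by
    intro v
    have := hdeg v
    rwa [Set.ncard_eq_toFinset_card', Set.toFinset_setOf] at this
  set C : Finset V := (V2.biUnion P) \ V2 with hC
  set V1 : Finset V := (V2 ∪ C)ᶜ with hV1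
  have hdCV1 : Disjoint C V1 := by
    rw [Finset.disjoint_left]
    intro a ha hca
    rw [hV1, Finset.mem_compl] at hca
    exact hca (Finset.mem_union_right _ ha)
  have hdCV2 : Disjoint C V2 := Finset.sdiff_disjoint
  have hdV1V2 : Disjoint V1 V2 := by
    rw [Finset.disjoint_left]
    intro a ha hav
    rw [hV1, Finset.mem_compl] at ha
    exact ha (Finset.mem_union_left _ hav)
  refine ⟨C, V1, V2, hdCV1, hdCV2, hdV1V2, ?_, ?_, ?_, ?_⟩
  · ext a
    simp only [hV1, Finset.mem_union, Finset.mem_compl, Finset.mem_univ, iff_true]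
    tauto
  · intro u hu v hv
    have huV2 : u ∉ V2 := (Finset.disjoint_left.1 hdV1V2) hu
    have huC : u ∉ C := (Finset.disjoint_right.1 hdCV1) hu
    constructor
    · intro hE
      apply huC
      rw [hC, Finset.mem_sdiff]
      refine ⟨Finset.mem_biUnion.2 ⟨v, hv, ?_⟩, huV2⟩
      rw [hPdef]
      simp [hE]
    · intro hE
      have h1 : t v u := hst v u (Or.inr (Relation.TransGen.single hE))
      have h2 : t u v := htop v hv u huV2
      have : u = v := antisymm h2 h1
      subst this
      exact hacyc u (Relation.TransGen.single hE)
  · -- card of V1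
    have hCcard : C.card ≤ k * d_m := by
      calc C.card ≤ (V2.biUnion P).card := Finset.card_le_card (Finset.sdiff_subset)
        _ ≤ ∑ v ∈ V2, (P v).card := Finset.card_biUnion_le
        _ ≤ ∑ _v ∈ V2, d_m := Finset.sum_le_sum fun v _ => hP v
        _ = k * d_m := by rw [Finset.sum_const, hV2card, smul_eq_mul]
    have hUcard : (V2 ∪ C).card ≤ k + k * d_m := by
      calc (V2 ∪ C).card ≤ V2.card + C.card := Finset.card_union_le _ _
        _ ≤ k + k * d_m := by rw [hV2card]; omega
    have hV1card : V1.card = n - (V2 ∪ C).card := by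
      rw [hV1, Finset.card_compl, hn]
    have hexp : k * (2 * d_m + 2) = 2 * (k * d_m) + 2 * k := by ring
    omega
  · rw [hV2card]
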